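/- arXiv:2212.11088 — 7 statements merged into one kernel-verified Lean document; each statement's English description precedes it below -/
import Mathlib

section
/- (Correctness of classic forward-mode AD) Let V be a type with decidable equality, D a commutative semiring, var : V → D, and x : V. Let φ : MvPolynomial V ℕ →+* TrivSqZeroExt D D be the unique semiring homomorphism into the dual numbers over D sending X y to (var y, if x = y then 1 else 0). Then for every polynomial p, the first component of φ p equals eval var p and the second component equals eval var (pderiv x p). -/
/-- Correctness of classic forward-mode AD with dual numbers. -/
theorem forwardAD_dual_correct (V : Type*) [DecidableEq V] (D : Type*) [CommSemiring D]
    (var : V → D) (x : V)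
    (φ : MvPolynomial V ℕ →+* TrivSqZeroExt D D)
    (hφ : ∀ y : V,
      (φ (MvPolynomial.X y)).fst = var y ∧
      (φ (MvPolynomial.X y)).snd = (if x = y then 1 else 0)) :
    ∀ p : MvPolynomial V ℕ,
      (φ p).fst = MvPolynomial.eval₂ (Nat.castRingHom D) var p ∧
      (φ p).snd = MvPolynomial.eval₂ (Nat.castRingHom D) var (MvPolynomial.pderiv x p) := by
  intro p
  induction p using MvPolynomial.induction_on with
  | C a =>
    have : (MvPolynomial.C a : MvPolynomial V ℕ) = (a : MvPolynomial V ℕ) := by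
      simp [MvPolynomial.C_eq_coe_nat]
    rw [this]
    constructor
    · rw [map_natCast]
      simp [TrivSqZeroExt.fst_natCast]
    · rw [map_natCast]
      simp [TrivSqZeroExt.snd_natCast]
  | add p q hp hq =>
    constructor
    · simp [map_add, TrivSqZeroExt.fst_add, hp.1, hq.1]
    · simp [map_add, TrivSqZeroExt.snd_add, hp.2, hq.2]
  | mul_X p y hp =>
    constructor
    · rw [map_mul, TrivSqZeroExt.fst_mul, hp.1, (hφ y).1]
      simp
    · rw [map_mul, TrivSqZeroExt.snd_mul, hp.1, hp.2, (hφ y).1, (hφ y).2]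
      rw [MvPolynomial.pderiv_mul, MvPolynomial.pderiv_X]
      simp only [Pi.single_apply, smul_eq_mul, MulOpposite.op_smul, MulOpposite.smul_eq_mul_unop,
        MulOpposite.unop_op]
      rcases eq_or_ne x y with h | h
      · subst h; simp [MvPolynomial.eval₂_mul, add_comm]
      · simp [h, h.symm, MvPolynomial.eval₂_mul]
end

section
/- (Forward-mode AD specification, fusion form) Let V be a type with decidable equality, D a commutative semiring, var : V → D, and x : V. Let sym : MvPolynomial V ℕ →+* TrivSqZeroExt (MvPolynomial V ℕ) (MvPolynomial V ℕ) be the unique semiring homomorphism sending X y to (X y, if x = y then 1 else 0), and let fwd : MvPolynomial V ℕ →+* TrivSqZeroExt D D be the unique semiring homomorphism sending X y to (var y, if x = y then 1 else 0). Then for every polynomial p, the first component of fwd p equals eval var applied to the first component of sym p, and the second component of fwd p equals eval var applied to the second component of sym p. -/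
/-- Forward-mode AD is the fusion of symbolic differentiation and evaluation. -/
theorem forwardAD_fusion (V : Type*) [DecidableEq V] (D : Type*) [CommSemiring D]
    (var : V → D) (x : V)
    (sym : MvPolynomial V ℕ →+* TrivSqZeroExt (MvPolynomial V ℕ) (MvPolynomial V ℕ))
    (hsym : ∀ y : V,
      (sym (MvPolynomial.X y)).fst = MvPolynomial.X y ∧
      (sym (MvPolynomial.X y)).snd = (if x = y then 1 else 0))
    (fwd : MvPolynomial V ℕ →+* TrivSqZeroExt D D)
    (hfwd : ∀ y : V,
      (fwd (MvPolynomial.X y)).fst = var y ∧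
      (fwd (MvPolynomial.X y)).snd = (if x = y then 1 else 0)) :
    ∀ p : MvPolynomial V ℕ,
      (fwd p).fst = MvPolynomial.eval₂ (Nat.castRingHom D) var ((sym p).fst) ∧
      (fwd p).snd = MvPolynomial.eval₂ (Nat.castRingHom D) var ((sym p).snd) := by
  intro p
  induction p using MvPolynomial.induction_on with
  | C a =>
    have h1 : (MvPolynomial.C a : MvPolynomial V ℕ) = (a : MvPolynomial V ℕ) := by
      simp [MvPolynomial.C_eq_coe_nat]
    rw [h1]
    simp [map_natCast]
  | add p q hp hq =>
    simp only [sym.map_add, fwd.map_add, TrivSqZeroExt.fst_add, TrivSqZeroExt.snd_add, hp.1, hp.2, hq.1, hq.2,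
      MvPolynomial.eval₂_add]
    exact ⟨trivial, trivial⟩
  | mul_X p y hp =>
    obtain ⟨h1, h2⟩ := hsym y
    obtain ⟨h3, h4⟩ := hfwd y
    simp only [map_mul, TrivSqZeroExt.fst_mul, TrivSqZeroExt.snd_mul, h1, h2, h3, h4,
      hp.1, hp.2, map_add, map_mul, MvPolynomial.eval₂_X, smul_eq_mul, MvPolynomial.smul_eq_C_mul, MvPolynomial.eval₂_mul]
    constructor
    · trivial
    · split <;> simp [mul_comm]
end

section
/- (Correctness of dense forward-mode AD: the whole gradient at once) Let V be a type with decidable equality, D a commutative semiring, and var : V → D. Equip the function space V → D with its pointwise D-module structure. Let φ : MvPolynomial V ℕ →+* TrivSqZeroExt D (V → D) be the unique semiring homomorphism sending X y to (var y, Pi.single y 1). Then for every polynomial p: the first component of φ p equals eval var p, and for every x : V, the second component of φ p evaluated at x equals eval var (pderiv x p). -/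
/-- Correctness of dense forward-mode AD: it computes the whole gradient at once. -/
theorem forwardAD_dense_correct (V : Type*) [DecidableEq V] (D : Type*) [CommSemiring D]
    (var : V → D)
    (φ : MvPolynomial V ℕ →+* TrivSqZeroExt D (V → D))
    (hφ : ∀ y : V,
      (φ (MvPolynomial.X y)).fst = var y ∧
      (φ (MvPolynomial.X y)).snd = Pi.single y 1) :
    ∀ p : MvPolynomial V ℕ,
      (φ p).fst = MvPolynomial.eval₂ (Nat.castRingHom D) var p ∧
      ∀ x : V, (φ p).snd x =
        MvPolynomial.eval₂ (Nat.castRingHom D) var (MvPolynomial.pderiv x p) := by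
  intro p
  induction p using MvPolynomial.induction_on with
  | C n =>
    constructor
    · rw [show (MvPolynomial.C n : MvPolynomial V ℕ) = (n : MvPolynomial V ℕ) from
        (map_natCast MvPolynomial.C n).symm, map_natCast]
      simp [MvPolynomial.eval₂_natCast]
    · intro x
      rw [show (MvPolynomial.C n : MvPolynomial V ℕ) = (n : MvPolynomial V ℕ) from
        (map_natCast MvPolynomial.C n).symm, map_natCast]
      simp
  | add p q hp hq =>
    constructor
    · simp [map_add, hp.1, hq.1]
    · intro x
      simp [map_add, hp.2 x, hq.2 x, Pi.add_apply]
  | mul_X p y hp =>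
    constructor
    · simp [map_mul, TrivSqZeroExt.fst_mul, hp.1, (hφ y).1]
    · intro x
      have h1 := (hφ y).1
      have h2 := (hφ y).2
      simp only [map_mul, TrivSqZeroExt.snd_mul, MvPolynomial.pderiv_mul,
        MvPolynomial.pderiv_X, map_add, MvPolynomial.eval₂_mul, MvPolynomial.eval₂_X,
        Pi.add_apply, h1, h2, hp.1, hp.2 x]
      rw [Pi.smul_apply, Pi.smul_apply]
      rcases eq_or_ne x y with rfl | hxy
      · simp [Pi.single_eq_same, MvPolynomial.pderiv_X, smul_eq_mul, hp.1, hp.2 x, mul_comm,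
          add_comm]
      · simp [Pi.single_eq_of_ne hxy, MvPolynomial.pderiv_X, Pi.single_eq_of_ne (Ne.symm hxy),
          smul_eq_mul, hp.2 x, mul_comm]
end

section
/- (Main correctness theorem for abstract AD) Let V be a type, D a commutative semiring, E₁ and E₂ D-modules, δ₁ : V → E₁ and δ₂ : V → E₂, and h : E₁ →ₗ[D] E₂ a D-linear map with h (δ₁ v) = δ₂ v for all v : V. Let var : V → D, and let φᵢ : MvPolynomial V ℕ →+* TrivSqZeroExt D Eᵢ (for i = 1, 2) be the unique semiring homomorphisms sending X v to (var v, δᵢ v). Then for every polynomial p, the first components of φ₁ p and φ₂ p are equal, and the second component of φ₂ p equals h applied to the second component of φ₁ p. -/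
/-- Main correctness theorem for abstract AD: a Kronecker homomorphism between
tangent modules relates the corresponding instances of the abstract algorithm. -/
theorem abstractAD_correct (V : Type*) (D : Type*) [CommSemiring D]
    (E₁ E₂ : Type*)
    [AddCommMonoid E₁] [Module D E₁] [Module Dᵐᵒᵖ E₁] [IsCentralScalar D E₁]
    [SMulCommClass D Dᵐᵒᵖ E₁]
    [AddCommMonoid E₂] [Module D E₂] [Module Dᵐᵒᵖ E₂] [IsCentralScalar D E₂]
    [SMulCommClass D Dᵐᵒᵖ E₂]
    (δ₁ : V → E₁) (δ₂ : V → E₂) (h : E₁ →ₗ[D] E₂)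
    (hδ : ∀ v : V, h (δ₁ v) = δ₂ v)
    (var : V → D)
    (φ₁ : MvPolynomial V ℕ →+* TrivSqZeroExt D E₁)
    (hφ₁ : ∀ v : V,
      (φ₁ (MvPolynomial.X v)).fst = var v ∧ (φ₁ (MvPolynomial.X v)).snd = δ₁ v)
    (φ₂ : MvPolynomial V ℕ →+* TrivSqZeroExt D E₂)
    (hφ₂ : ∀ v : V,
      (φ₂ (MvPolynomial.X v)).fst = var v ∧ (φ₂ (MvPolynomial.X v)).snd = δ₂ v) :
    ∀ p : MvPolynomial V ℕ,
      (φ₁ p).fst = (φ₂ p).fst ∧ (φ₂ p).snd = h ((φ₁ p).snd) := by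
  intro p
  induction p using MvPolynomial.induction_on with
  | C a =>
    simp [map_natCast]
  | add p q hp hq =>
    simp only [map_add, TrivSqZeroExt.fst_add, TrivSqZeroExt.snd_add, hp.1, hp.2, hq.1, hq.2]
    exact ⟨trivial, trivial⟩
  | mul_X p v hp =>
    simp only [map_mul, TrivSqZeroExt.fst_mul, TrivSqZeroExt.snd_mul, hp.1, hp.2,
      (hφ₁ v).1, (hφ₁ v).2, (hφ₂ v).1, (hφ₂ v).2, ← hδ v, op_smul_eq_smul, map_add,
      map_smul]
    exact ⟨trivial, trivial⟩
end

section
/- (Correctness of reverse-mode AD) Let V be a type with decidable equality, D a commutative semiring, and var : V → D. Consider the D-module E = D →ₗ[D] (V →₀ D) of D-linear maps from D to the finitely supported functions, and the Kronecker delta δ v = Finsupp.lsingle v (the linear map d ↦ Finsupp.single v d). Let φ : MvPolynomial V ℕ →+* TrivSqZeroExt D E be the unique semiring homomorphism sending X y to (var y, Finsupp.lsingle y). Then for every polynomial p: the first component of φ p equals eval var p, and for every x : V, applying the second component of φ p to the scalar 1 and evaluating the resulting finitely supported function at x yields eval var (pderiv x p). -/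
/-- Correctness of reverse-mode AD with the linear-map ("accumulating
multiplications") tangent representation. -/
theorem reverseAD_correct (V : Type*) [DecidableEq V] (D : Type*) [CommSemiring D]
    (var : V → D)
    (φ : MvPolynomial V ℕ →+* TrivSqZeroExt D (D →ₗ[D] (V →₀ D)))
    (hφ : ∀ y : V,
      (φ (MvPolynomial.X y)).fst = var y ∧
      (φ (MvPolynomial.X y)).snd = Finsupp.lsingle y) :
    ∀ p : MvPolynomial V ℕ,
      (φ p).fst = MvPolynomial.eval₂ (Nat.castRingHom D) var p ∧
      ∀ x : V, ((φ p).snd 1) x =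
        MvPolynomial.eval₂ (Nat.castRingHom D) var (MvPolynomial.pderiv x p) := by
  intro p
  induction p using MvPolynomial.induction_on with
  | C a =>
    have h : (MvPolynomial.C a : MvPolynomial V ℕ) = (a : MvPolynomial V ℕ) := by simp
    constructor
    · rw [h, map_natCast]; simp
    · intro x; rw [h, map_natCast]; simp
  | add p q hp hq =>
    exact ⟨by simp [hp.1, hq.1], fun x => by simp [hp.2 x, hq.2 x]⟩
  | mul_X p y hp =>
    constructor
    · simp [(hφ y).1, hp.1]
    · intro x
      simp [TrivSqZeroExt.snd_mul, (hφ y).1, (hφ y).2, hp.1, hp.2 x,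
        MvPolynomial.pderiv_mul, Finsupp.single_apply, mul_comm, Pi.single_apply]
      rcases eq_or_ne y x with h | h <;> simp [h]
end

section
/- (Let rule for partial derivatives) Let R be a commutative semiring, V a type with decidable equality, and x, y : V with x ≠ y. Let e₁, e₂ : MvPolynomial V R, and let σ : V → MvPolynomial V R be the substitution with σ y = e₁ and σ z = X z for z ≠ y (i.e., σ = Function.update X y e₁). Then pderiv x (bind₁ σ e₂) = (bind₁ σ (pderiv y e₂)) · pderiv x e₁ + bind₁ σ (pderiv x e₂). -/
/-- Let rule for partial derivatives. -/
theorem pderiv_let_rule (R V : Type*) [CommSemiring R] [DecidableEq V]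
    (x y : V) (hxy : x ≠ y) (e₁ e₂ : MvPolynomial V R)
    (σ : V → MvPolynomial V R) (hσ : σ = Function.update MvPolynomial.X y e₁) :
    MvPolynomial.pderiv x (MvPolynomial.bind₁ σ e₂) =
      (MvPolynomial.bind₁ σ (MvPolynomial.pderiv y e₂)) * MvPolynomial.pderiv x e₁ +
        MvPolynomial.bind₁ σ (MvPolynomial.pderiv x e₂) := by
  subst hσ
  induction e₂ using MvPolynomial.induction_on with
  | C a => simp
  | add p q hp hq =>
      simp only [map_add, hp, hq]
      ring
  | mul_X p n hp =>
      simp only [map_mul, MvPolynomial.pderiv_mul, MvPolynomial.bind₁_X_right, map_add, hp]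
      by_cases hn : n = y
      · subst hn
        simp [Function.update_self, MvPolynomial.pderiv_X_of_ne hxy.symm,
          MvPolynomial.pderiv_X_self]
        ring
      · rw [Function.update_of_ne hn]
        by_cases hnx : n = x
        · subst hnx
          simp [MvPolynomial.pderiv_X_self, MvPolynomial.pderiv_X_of_ne hn]
          ring
        · simp [MvPolynomial.pderiv_X_of_ne hn, MvPolynomial.pderiv_X_of_ne hnx]
          ring
end

section
/- (Correctness of fused second-order forward-mode AD) Let V be a type with decidable equality, D a commutative semiring, and var : V → D. Let D₁ = TrivSqZeroExt D (V → D), where V → D carries the pointwise D-module structure, and equip V → D₁ with the pointwise D₁-module structure. Let φ : MvPolynomial V ℕ →+* TrivSqZeroExt D₁ (V → D₁) be the unique semiring homomorphism sending X z to the pair ((var z, Pi.single z 1), Pi.single z (1 : D₁)). Then for every polynomial p and all x, y : V: the first component of the first component of φ p equals eval var p; the second component of the first component of φ p, evaluated at x, equals eval var (pderiv x p); and the second component of (the second component of φ p evaluated at x) evaluated at y equals eval var (pderiv y (pderiv x p)). -/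
set_option maxHeartbeats 1000000 in
set_option synthInstance.maxHeartbeats 400000 in
/-- Correctness of fused second-order forward-mode AD with nested Nagata numbers. -/
theorem forwardAD_secondOrder_correct (V : Type*) [DecidableEq V] (D : Type*)
    [CommSemiring D] (var : V → D)
    (φ : MvPolynomial V ℕ →+*
      TrivSqZeroExt (TrivSqZeroExt D (V → D)) (V → TrivSqZeroExt D (V → D)))
    (hφ : ∀ z : V,
      ((φ (MvPolynomial.X z)).fst).fst = var z ∧
      ((φ (MvPolynomial.X z)).fst).snd = Pi.single z 1 ∧
      (φ (MvPolynomial.X z)).snd = Pi.single z (1 : TrivSqZeroExt D (V → D))) :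
    ∀ (p : MvPolynomial V ℕ) (x y : V),
      ((φ p).fst).fst = MvPolynomial.eval₂ (Nat.castRingHom D) var p ∧
      ((φ p).fst).snd x =
        MvPolynomial.eval₂ (Nat.castRingHom D) var (MvPolynomial.pderiv x p) ∧
      (((φ p).snd x).snd) y =
        MvPolynomial.eval₂ (Nat.castRingHom D) var
          (MvPolynomial.pderiv y (MvPolynomial.pderiv x p)) := by
  classical
  set e : MvPolynomial V ℕ →+* D := MvPolynomial.eval₂Hom (Nat.castRingHom D) var with he
  have key : ∀ p : MvPolynomial V ℕ,
      ((φ p).fst).fst = e p ∧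
      (∀ x, ((φ p).fst).snd x = e (MvPolynomial.pderiv x p)) ∧
      (∀ x, ((φ p).snd x).fst = e (MvPolynomial.pderiv x p)) ∧
      (∀ x y, ((φ p).snd x).snd y = e (MvPolynomial.pderiv y (MvPolynomial.pderiv x p))) := by
    intro p
    induction p using MvPolynomial.induction_on with
    | C a =>
      rw [eq_natCast (MvPolynomial.C : ℕ →+* MvPolynomial V ℕ) a, map_natCast φ a]
      refine ⟨?_, fun x => ?_, fun x => ?_, fun x y => ?_⟩ <;>
        simp [TrivSqZeroExt.fst_natCast, TrivSqZeroExt.snd_natCast]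
    | add p q hp hq =>
      obtain ⟨hp1, hp2, hp3, hp4⟩ := hp
      obtain ⟨hq1, hq2, hq3, hq4⟩ := hq
      rw [map_add φ]
      refine ⟨?_, fun x => ?_, fun x => ?_, fun x y => ?_⟩
      · rw [TrivSqZeroExt.fst_add, TrivSqZeroExt.fst_add, hp1, hq1, map_add]
      · rw [TrivSqZeroExt.fst_add, TrivSqZeroExt.snd_add, Pi.add_apply, hp2, hq2,
          map_add, map_add]
      · rw [TrivSqZeroExt.snd_add, Pi.add_apply, TrivSqZeroExt.fst_add, hp3, hq3,
          map_add, map_add]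
      · rw [TrivSqZeroExt.snd_add, Pi.add_apply, TrivSqZeroExt.snd_add, Pi.add_apply,
          hp4, hq4, map_add, map_add, map_add]
    | mul_X p z hp =>
      obtain ⟨hp1, hp2, hp3, hp4⟩ := hp
      obtain ⟨hz1, hz2, hz3⟩ := hφ z
      rw [map_mul φ]
      have heX : e (MvPolynomial.X z) = var z := MvPolynomial.eval₂Hom_X' _ _ _
      refine ⟨?_, fun x => ?_, fun x => ?_, fun x y => ?_⟩
      · rw [TrivSqZeroExt.fst_mul, TrivSqZeroExt.fst_mul, hp1, hz1, map_mul, heX]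
      · rw [TrivSqZeroExt.fst_mul, TrivSqZeroExt.snd_mul, op_smul_eq_smul]
        simp only [hz1, hz2, hp1, Pi.add_apply, Pi.smul_apply, smul_eq_mul,
          Pi.single_apply, hp2]
        rw [MvPolynomial.pderiv_mul, map_add, map_mul, map_mul, MvPolynomial.pderiv_X,
          Pi.single_apply, heX]
        rcases eq_or_ne x z with h | h
        · subst h; simp; ring
        · simp [h, Ne.symm h]; ring
      · rw [TrivSqZeroExt.snd_mul, op_smul_eq_smul]
        simp only [hz3, Pi.add_apply, Pi.smul_apply, Pi.single_apply, smul_ite, smul_zero,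
          smul_eq_mul, mul_one, TrivSqZeroExt.fst_add, TrivSqZeroExt.fst_mul, hz1, hp1, hp3]
        rw [MvPolynomial.pderiv_mul, map_add, map_mul, map_mul, MvPolynomial.pderiv_X,
          Pi.single_apply, heX]
        rcases eq_or_ne x z with h | h
        · subst h; simp [hp1]; ring
        · simp [h, Ne.symm h, hp1]; ring
      · rw [TrivSqZeroExt.snd_mul, op_smul_eq_smul]
        simp only [hz3, Pi.add_apply, Pi.smul_apply, Pi.single_apply, smul_ite, smul_zero,
          smul_eq_mul, mul_one, TrivSqZeroExt.snd_add, TrivSqZeroExt.snd_mul,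
          op_smul_eq_smul, hz1, hz2, hp1, hp2, hp3, hp4]
        rw [MvPolynomial.pderiv_mul, map_add (MvPolynomial.pderiv y), MvPolynomial.pderiv_mul,
          MvPolynomial.pderiv_mul, MvPolynomial.pderiv_X, MvPolynomial.pderiv_X]
        simp only [map_add, map_mul, Pi.single_apply, heX]
        rcases eq_or_ne x z with h | h <;> rcases eq_or_ne y z with h' | h' <;>
            subst_vars <;>
          simp [*, Ne.symm, hp1, hp2, hp3, hp4, Pi.smul_apply, smul_eq_mul,
            Pi.single_apply, TrivSqZeroExt.fst_mul, TrivSqZeroExt.snd_mul] <;> ring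
  intro p x y
  exact ⟨(key p).1, (key p).2.1 x, (key p).2.2.2 x y⟩
end
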